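/- arXiv:1407.8125 — 2 statements merged into one kernel-verified Lean document; each statement's English description precedes it below -/
import Mathlib

section
/- Suppose char F = 0. Let g be a finite-dimensional Lie algebra over F with solvable radical r, and let n = [g, r]. Then n acts trivially on every finite-dimensional irreducible g-module V, i.e., x·v = 0 for all x ∈ n and v ∈ V. -/
set_option linter.unusedSectionVars false

open LieModule Module

section KeyLemma

variable {K L V : Type*} [Field K] [CharZero K] [LieRing L] [LieAlgebra K L]
  [AddCommGroup V] [Module K V] [LieRingModule L V] [LieModule K L V] [Module.Finite K V]

theorem chi_lie_eq_zero (A : LieIdeal K L) (χ : L → K) {w : V} (hw0 : w ≠ 0)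
    (hw : ∀ a ∈ A, ⁅a, w⁆ = χ a • w) {a : L} (ha : a ∈ A) (y : L) : χ ⁅a, y⁆ = 0 := by
  classical
  set ρ : L → Module.End K V := fun z => LieModule.toEnd K L V z with hρ
  have hρap : ∀ (z : L) (v : V), ρ z v = ⁅z, v⁆ := fun z v => rfl
  set f : ℕ → V := fun k => ((ρ y) ^ k) w with hf
  set U : ℕ → Submodule K V := fun k => Submodule.span K (f '' Set.Iio k) with hU
  have hUmono : Monotone U := fun i j hij =>
    Submodule.span_mono (Set.image_mono (Set.Iio_subset_Iio hij))
  have hf0 : f 0 = w := by simp [hf]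
  have hfsucc : ∀ k, f (k + 1) = ⁅y, f k⁆ := by
    intro k
    simp only [hf, pow_succ', Module.End.mul_apply]
    rfl
  have hfU : ∀ k, f k ∈ U (k + 1) := fun k =>
    Submodule.subset_span ⟨k, Nat.lt_succ_self k, rfl⟩
  have hyU : ∀ k, ∀ v ∈ U k, ⁅y, v⁆ ∈ U (k + 1) := by
    intro k v hv
    induction hv using Submodule.span_induction with
    | mem u hu =>
      obtain ⟨j, hj, rfl⟩ := hu
      rw [← hfsucc j]
      exact Submodule.subset_span ⟨j + 1, Nat.succ_lt_succ hj, rfl⟩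
    | zero => simp
    | add u v _ _ h1 h2 => rw [lie_add]; exact add_mem h1 h2
    | smul c u _ h1 => rw [lie_smul]; exact Submodule.smul_mem _ _ h1
  have hkey : ∀ k, ∀ b ∈ A, ⁅b, f k⁆ - χ b • f k ∈ U k := by
    intro k
    induction k with
    | zero =>
      intro b hb
      rw [hf0, hw b hb, sub_self]
      exact zero_mem _
    | succ k ih =>
      intro b hb
      have hby : ⁅b, y⁆ ∈ A := lie_mem_left K L A b y hb
      have h1 : ⁅b, f (k + 1)⁆ = ⁅⁅b, y⁆, f k⁆ + ⁅y, ⁅b, f k⁆⁆ := by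
        rw [hfsucc k, leibniz_lie]
      have h2 : ⁅⁅b, y⁆, f k⁆ - χ ⁅b, y⁆ • f k ∈ U k := ih _ hby
      have h4 : ⁅y, ⁅b, f k⁆ - χ b • f k⁆ ∈ U (k + 1) := hyU k _ (ih b hb)
      have h5 : ⁅y, ⁅b, f k⁆ - χ b • f k⁆ = ⁅y, ⁅b, f k⁆⁆ - χ b • f (k + 1) := by
        rw [lie_sub, lie_smul, hfsucc k]
      have heq : ⁅b, f (k + 1)⁆ - χ b • f (k + 1) =
          (⁅⁅b, y⁆, f k⁆ - χ ⁅b, y⁆ • f k) + χ ⁅b, y⁆ • f k +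
            ⁅y, ⁅b, f k⁆ - χ b • f k⁆ := by
        rw [h5, h1]; abel
      rw [heq]
      exact add_mem (add_mem (hUmono k.le_succ h2)
        (Submodule.smul_mem _ _ (hfU k))) h4
  -- stabilization
  obtain ⟨N, hN⟩ := monotone_stabilizes_iff_noetherian.mpr
    (inferInstance : IsNoetherian K V) ⟨U, hUmono⟩
  set S : Submodule K V := U N with hS
  have hUS : ∀ k, U k ≤ S := fun k =>
    le_trans (hUmono (le_max_right N k)) (le_of_eq (hN _ (le_max_left N k)).symm)
  have hfS : ∀ k, f k ∈ S := fun k => hUS (k + 1) (hfU k)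
  have hyS : ∀ v ∈ S, ⁅y, v⁆ ∈ S := fun v hv => hUS (N + 1) (hyU N v hv)
  have haS : ∀ b ∈ A, ∀ v ∈ S, ⁅b, v⁆ ∈ S := by
    intro b hb v hv
    induction hv using Submodule.span_induction with
    | mem u hu =>
      obtain ⟨j, _, rfl⟩ := hu
      have : ⁅b, f j⁆ = (⁅b, f j⁆ - χ b • f j) + χ b • f j := by abel
      rw [this]
      exact add_mem (hUS j (hkey j b hb)) (Submodule.smul_mem _ _ (hfS j))
    | zero => simp
    | add u v _ _ h1 h2 => rw [lie_add]; exact add_mem h1 h2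
    | smul c u _ h1 => rw [lie_smul]; exact Submodule.smul_mem _ _ h1
  set b : L := ⁅a, y⁆ with hbdef
  have hbA : b ∈ A := lie_mem_left K L A a y ha
  have hbS : ∀ v ∈ S, ρ b v ∈ S := fun v hv => haS b hbA v hv
  have haS' : ∀ v ∈ S, ρ a v ∈ S := fun v hv => haS a ha v hv
  have hyS' : ∀ v ∈ S, ρ y v ∈ S := fun v hv => hyS v hv
  set Rb : Module.End K ↥S := (ρ b).restrict hbS with hRb
  set Ra : Module.End K ↥S := (ρ a).restrict haS' with hRa
  set Y : Module.End K ↥S := (ρ y).restrict hyS' with hY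
  -- trace of Rb is zero
  have htr0 : LinearMap.trace K ↥S Rb = 0 := by
    have hcomm : Rb = Ra * Y - Y * Ra := by
      ext v
      have : ρ b (v : V) = ρ a (ρ y (v : V)) - ρ y (ρ a (v : V)) := by
        simp only [hρ, hbdef, LieHom.map_lie, Ring.lie_def, LinearMap.sub_apply,
          Module.End.mul_apply]
      simp only [LinearMap.sub_apply, Module.End.mul_apply, hRb, hRa, hY,
        Submodule.coe_sub, LinearMap.restrict_coe_apply, this]
    rw [hcomm, map_sub, LinearMap.trace_mul_comm, sub_self]
  -- nilpotency of Rb - χ b • 1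
  set g : Module.End K V := ρ b - χ b • (1 : Module.End K V) with hg
  have hgap : ∀ v, g v = ⁅b, v⁆ - χ b • v := by
    intro v; simp [hg, hρap]
  have hgstep : ∀ k, ∀ v ∈ U (k + 1), g v ∈ U k := by
    intro k v hv
    induction hv using Submodule.span_induction with
    | mem u hu =>
      obtain ⟨j, hj, rfl⟩ := hu
      have hjk : j ≤ k := Nat.lt_succ_iff.mp hj
      rw [hgap]
      exact hUmono hjk (hkey j b hbA)
    | zero => simp
    | add u v _ _ h1 h2 => rw [map_add]; exact add_mem h1 h2
    | smul c u _ h1 => rw [map_smul]; exact Submodule.smul_mem _ _ h1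
  have hgnil : ∀ k, ∀ v ∈ U k, (g ^ k) v = 0 := by
    intro k
    induction k with
    | zero =>
      intro v hv
      have : v = 0 := by
        simpa [hU, Set.Iio, Submodule.span_empty] using hv
      simp [this]
    | succ k ih =>
      intro v hv
      rw [pow_succ, Module.End.mul_apply]
      exact ih _ (hgstep k v hv)
  have hgS : ∀ v ∈ S, g v ∈ S := by
    intro v hv
    rw [hgap]
    exact sub_mem (haS b hbA v hv) (Submodule.smul_mem _ _ hv)
  have hGnil : IsNilpotent (g.restrict hgS) := by
    refine ⟨N, ?_⟩
    rw [Module.End.pow_restrict]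
    ext v
    have : (g ^ N) (v : V) = 0 := hgnil N _ v.2
    simp [LinearMap.restrict_apply, this]
  have hGeq : g.restrict hgS = Rb - χ b • (1 : Module.End K ↥S) := by
    ext v
    simp [LinearMap.restrict_apply, hg, hRb]
  have htrG : LinearMap.trace K ↥S (g.restrict hgS) = 0 :=
    IsReduced.eq_zero _ (LinearMap.isNilpotent_trace_of_isNilpotent hGnil)
  rw [hGeq, map_sub, htr0, map_smul, LinearMap.trace_one, zero_sub, neg_eq_zero,
    smul_eq_mul] at htrG
  have hfinpos : 0 < finrank K ↥S := by
    have : Nontrivial ↥S := ⟨⟨⟨w, hf0 ▸ hfS 0⟩, 0, by simp [hw0]⟩⟩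
    exact finrank_pos
  rcases mul_eq_zero.mp htrG with h | h
  · exact h
  · exact absurd h (Nat.cast_ne_zero.mpr hfinpos.ne')

theorem chi_smul_eq (A : LieIdeal K L) (χ : L → K) {w : V} (hw0 : w ≠ 0)
    (hw : ∀ a ∈ A, ⁅a, w⁆ = χ a • w) {a : L} (ha : a ∈ A) (c : K) : χ (c • a) = c * χ a := by
  have h : (χ (c • a) - c * χ a) • w = 0 := by
    rw [sub_smul, ← hw _ (Submodule.smul_mem _ _ ha), smul_lie, hw a ha, mul_smul]
    abel
  exact sub_eq_zero.mp ((smul_eq_zero.mp h).resolve_right hw0)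

theorem chi_add_eq (A : LieIdeal K L) (χ : L → K) {w : V} (hw0 : w ≠ 0)
    (hw : ∀ a ∈ A, ⁅a, w⁆ = χ a • w) {a b : L} (ha : a ∈ A) (hb : b ∈ A) :
    χ (a + b) = χ a + χ b := by
  have h : (χ (a + b) - (χ a + χ b)) • w = 0 := by
    rw [sub_smul, ← hw _ (add_mem ha hb), add_lie, hw a ha, hw b hb, add_smul]
    abel
  exact sub_eq_zero.mp ((smul_eq_zero.mp h).resolve_right hw0)

/-- The weight space of an ideal is invariant under the whole algebra. -/
theorem weight_space_invariant (A : LieIdeal K L) (χ : L → K) {w : V} (hw0 : w ≠ 0)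
    (hw : ∀ a ∈ A, ⁅a, w⁆ = χ a • w) (v : V) (hv : ∀ a ∈ A, ⁅a, v⁆ = χ a • v) (y : L) :
    ∀ a ∈ A, ⁅a, ⁅y, v⁆⁆ = χ a • ⁅y, v⁆ := by
  intro a ha
  rw [leibniz_lie, hv _ (lie_mem_left K L A a y ha),
    chi_lie_eq_zero A χ hw0 hw ha y, hv a ha, lie_smul]
  simp

end KeyLemma

section LieTheorem

variable (K : Type*) [Field K] [IsAlgClosed K] [CharZero K]

/-- Lie's theorem: a finite-dimensional representation of a solvable Lie algebra over an
algebraically closed field of characteristic zero has a common eigenvector. -/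
theorem lie_theorem_aux (n : ℕ) (L : Type*) [LieRing L] [LieAlgebra K L] [Module.Finite K L]
    [LieAlgebra.IsSolvable L] (hn : Module.finrank K L ≤ n)
    (V : Type*) [AddCommGroup V] [Module K V] [LieRingModule L V] [LieModule K L V]
    [Module.Finite K V] [Nontrivial V] :
    ∃ (χ : L → K) (v : V), v ≠ 0 ∧ ∀ x : L, ⁅x, v⁆ = χ x • v := by
  classical
  induction n generalizing L V with
  | zero =>
    rcases subsingleton_or_nontrivial L with hL | hL
    · obtain ⟨v, hv⟩ := exists_ne (0 : V)
      refine ⟨0, v, hv, fun x => ?_⟩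
      have : x = 0 := Subsingleton.elim x 0
      simp [this]
    · have h1 : 0 < Module.finrank K L := Module.finrank_pos
      exact absurd (h1.trans_le hn) (lt_irrefl 0)
  | succ n ih =>
    rcases subsingleton_or_nontrivial L with hL | hL
    · obtain ⟨v, hv⟩ := exists_ne (0 : V)
      refine ⟨0, v, hv, fun x => ?_⟩
      have : x = 0 := Subsingleton.elim x 0
      simp [this]
    -- derived ideal is proper
    have hD : LieAlgebra.derivedSeries K L 1 < ⊤ :=
      LieAlgebra.derivedSeries_lt_top_of_solvable K L
    set D : LieIdeal K L := LieAlgebra.derivedSeries K L 1 with hDdef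
    -- a linear functional vanishing on D
    have hDlt : (D : Submodule K L) < ⊤ := by
      rcases lt_iff_le_and_ne.mp hD with ⟨h1, h2⟩
      refine lt_iff_le_and_ne.mpr ⟨le_top, fun hc => h2 ?_⟩
      rw [LieIdeal.toLieSubalgebra_toSubmodule, LieSubmodule.toSubmodule_eq_top] at hc
      simpa using hc
    have : Nontrivial (L ⧸ (D : Submodule K L)) := Submodule.Quotient.nontrivial_iff.mpr hDlt.ne
    obtain ⟨q, hq⟩ := exists_ne (0 : L ⧸ (D : Submodule K L))
    obtain ⟨g, hg⟩ : ∃ g : Module.Dual K (L ⧸ (D : Submodule K L)), g q ≠ 0 := by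
      by_contra hc
      push_neg at hc
      exact hq ((Module.forall_dual_apply_eq_zero_iff K q).mp hc)
    set φ : L →ₗ[K] K := g ∘ₗ (D : Submodule K L).mkQ with hφ
    have hDker : ∀ t ∈ D, φ t = 0 := by
      intro t ht
      show g ((D : Submodule K L).mkQ t) = 0
      have h0 : (D : Submodule K L).mkQ t = 0 := by
        rw [Submodule.mkQ_apply, Submodule.Quotient.mk_eq_zero]
        exact ht
      rw [h0, map_zero]
    obtain ⟨z₀, hz₀⟩ := (D : Submodule K L).mkQ_surjective q
    have hφz₀ : φ z₀ ≠ 0 := by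
      show g ((D : Submodule K L).mkQ z₀) ≠ 0
      rw [hz₀]; exact hg
    set z : L := (φ z₀)⁻¹ • z₀ with hzdef
    have hφz : φ z = 1 := by
      rw [hzdef, map_smul, smul_eq_mul, inv_mul_cancel₀ hφz₀]
    -- the codimension-one ideal
    have hlie : ∀ (x m : L), m ∈ LinearMap.ker φ → ⁅x, m⁆ ∈ LinearMap.ker φ := by
      intro x m _
      have : ⁅x, m⁆ ∈ D := by
        rw [hDdef]
        exact LieSubmodule.lie_mem_lie (LieSubmodule.mem_top x) (LieSubmodule.mem_top m)
      exact LinearMap.mem_ker.mpr (hDker _ this)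
    set A : LieIdeal K L := { toSubmodule := LinearMap.ker φ,
                              lie_mem := fun {x m} hm => hlie x m hm } with hAdef
    have hAmem : ∀ t : L, t ∈ A ↔ φ t = 0 := fun t => Iff.rfl
    have hzA : z ∉ A := by
      intro hc
      rw [hAmem, hφz] at hc
      exact one_ne_zero hc
    -- instances for A
    haveI : LieAlgebra.IsSolvable (⊤ : LieIdeal K L) := by
      rw [← LieAlgebra.radical_eq_top_of_isSolvable (R := K) (L := L)]
      infer_instance
    haveI hAsolv : LieAlgebra.IsSolvable A :=
      LieAlgebra.le_solvable_ideal_solvable le_top inferInstance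
    haveI hAfin : Module.Finite K A :=
      inferInstanceAs (Module.Finite K (LinearMap.ker φ))
    have hAn : Module.finrank K A ≤ n := by
      have h1 : Module.finrank K (LinearMap.ker φ) < Module.finrank K L := by
        refine Submodule.finrank_lt ?_
        intro hc
        exact hzA (by rw [hAmem, ← LinearMap.mem_ker, hc]; trivial)
      have h2 : Module.finrank K A = Module.finrank K (LinearMap.ker φ) := rfl
      omega
    obtain ⟨χ₀, w, hw0, hwA⟩ := ih A hAn V
    set χf : L → K := fun t => if h : t ∈ A then χ₀ ⟨t, h⟩ else 0 with hχf
    have hw : ∀ a ∈ A, ⁅a, w⁆ = χf a • w := by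
      intro a ha
      have h1 := hwA ⟨a, ha⟩
      rw [LieIdeal.coe_bracket_of_module] at h1
      rw [hχf]
      simpa [dif_pos ha] using h1
    -- the weight space of A
    set W : Submodule K V :=
      { carrier := {v | ∀ a ∈ A, ⁅a, v⁆ = χf a • v}
        add_mem' := by
          intro u v hu hv a ha
          rw [lie_add, hu a ha, hv a ha, smul_add]
        zero_mem' := by
          intro a _
          simp
        smul_mem' := by
          intro c u hu a ha
          rw [lie_smul, hu a ha, smul_comm] } with hW
    have hWmem : ∀ v : V, v ∈ W ↔ ∀ a ∈ A, ⁅a, v⁆ = χf a • v := fun v => Iff.rfl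
    have hwW : w ∈ W := hw
    have hzW : ∀ v ∈ W, (LieModule.toEnd K L V z) v ∈ W := by
      intro v hv
      exact weight_space_invariant A χf hw0 hw v hv z
    haveI : Nontrivial W := ⟨⟨⟨w, hwW⟩, 0, by simp [hw0]⟩⟩
    obtain ⟨μ, hμ⟩ := Module.End.exists_eigenvalue ((LieModule.toEnd K L V z).restrict hzW)
    obtain ⟨v', hv'⟩ := hμ.exists_hasEigenvector
    have hv0 : (v' : V) ≠ 0 := fun hc => hv'.2 (Subtype.ext hc)
    have hzv : ⁅z, (v' : V)⁆ = μ • (v' : V) := by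
      have h1 := congrArg Subtype.val hv'.apply_eq_smul
      simpa using h1
    refine ⟨fun x => χf (x - φ x • z) + φ x * μ, (v' : V), hv0, fun x => ?_⟩
    have hxA : x - φ x • z ∈ A := by
      rw [hAmem, map_sub, map_smul, hφz, smul_eq_mul, mul_one, sub_self]
    have hsplit : ⁅x, (v' : V)⁆ = ⁅x - φ x • z, (v' : V)⁆ + ⁅φ x • z, (v' : V)⁆ := by
      rw [← add_lie, sub_add_cancel]
    rw [hsplit, (hWmem _).mp v'.2 _ hxA, smul_lie, hzv, add_smul, mul_smul]

end LieTheorem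

section Nilpotency

variable (K : Type*) [Field K] [IsAlgClosed K] [CharZero K]
variable {L : Type*} [LieRing L] [LieAlgebra K L]
variable (A : LieIdeal K L) [Module.Finite K A] [LieAlgebra.IsSolvable A]

theorem toEnd_nilpotent_of_mem_lie_top_solvable (n : ℕ)
    (V : Type*) [AddCommGroup V] [Module K V] [LieRingModule L V] [LieModule K L V]
    [Module.Finite K V] (hn : Module.finrank K V ≤ n)
    (x : L) (hx : x ∈ ⁅(⊤ : LieIdeal K L), A⁆) :
    IsNilpotent (LieModule.toEnd K L V x) := by
  classical
  induction n generalizing V with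
  | zero =>
    rcases subsingleton_or_nontrivial V with hV | hV
    · exact ⟨1, by ext v; simpa using (Subsingleton.elim _ _ : ⁅x, v⁆ = 0)⟩
    · have h1 : 0 < Module.finrank K V := Module.finrank_pos
      exact absurd (h1.trans_le hn) (lt_irrefl 0)
  | succ n ih =>
    rcases subsingleton_or_nontrivial V with hV | hV
    · exact ⟨1, by ext v; simpa using (Subsingleton.elim _ _ : ⁅x, v⁆ = 0)⟩
    obtain ⟨χ₀, w, hw0, hwA⟩ := lie_theorem_aux K (Module.finrank K A) A le_rfl V
    set χf : L → K := fun t => if h : t ∈ A then χ₀ ⟨t, h⟩ else 0 with hχf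
    have hw : ∀ a ∈ A, ⁅a, w⁆ = χf a • w := by
      intro a ha
      have h1 := hwA ⟨a, ha⟩
      rw [LieIdeal.coe_bracket_of_module] at h1
      rw [hχf]
      simpa [dif_pos ha] using h1
    have hxA : x ∈ A := LieSubmodule.lie_le_right A ⊤ hx
    -- χf vanishes on ⁅⊤, A⁆
    have hχf0 : χf 0 = 0 := by
      have h1 := hw 0 (zero_mem _)
      rw [zero_lie] at h1
      exact ((smul_eq_zero.mp h1.symm).resolve_right hw0)
    set P : Submodule K L :=
      { carrier := {t | t ∈ A ∧ χf t = 0}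
        add_mem' := by
          rintro u v ⟨hu1, hu2⟩ ⟨hv1, hv2⟩
          exact ⟨add_mem hu1 hv1, by rw [chi_add_eq A χf hw0 hw hu1 hv1, hu2, hv2, add_zero]⟩
        zero_mem' := ⟨zero_mem _, hχf0⟩
        smul_mem' := by
          rintro c u ⟨hu1, hu2⟩
          exact ⟨Submodule.smul_mem _ _ hu1,
            by rw [chi_smul_eq A χf hw0 hw hu1 c, hu2, mul_zero]⟩ } with hP
    have hχx : χf x = 0 := by
      have hle : (⁅(⊤ : LieIdeal K L), A⁆ : LieIdeal K L).toSubmodule ≤ P := by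
        rw [LieSubmodule.lieIdeal_oper_eq_linear_span']
        refine Submodule.span_le.mpr ?_
        rintro - ⟨y, -, a, ha, rfl⟩
        have hyaA : ⁅y, a⁆ ∈ A := lie_mem_right K L A y a ha
        have h2 : χf ⁅a, y⁆ = 0 := chi_lie_eq_zero A χf hw0 hw ha y
        have h3 : ⁅y, a⁆ = (-1 : K) • ⁅a, y⁆ := by
          rw [neg_one_smul, ← lie_skew]
        refine ⟨hyaA, ?_⟩
        rw [h3, chi_smul_eq A χf hw0 hw (lie_mem_left K L A a y ha) (-1 : K), h2, mul_zero]
      exact (hle hx).2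
    -- the weight space as a Lie submodule
    set W : LieSubmodule K L V :=
      { carrier := {v | ∀ a ∈ A, ⁅a, v⁆ = χf a • v}
        add_mem' := by
          intro u v hu hv a ha
          rw [lie_add, hu a ha, hv a ha, smul_add]
        zero_mem' := by intro a _; simp
        smul_mem' := by
          intro c u hu a ha
          rw [lie_smul, hu a ha, smul_comm]
        lie_mem := by
          intro y v hv
          exact weight_space_invariant A χf hw0 hw v hv y } with hWdef
    have hwW : w ∈ W := hw
    have hxW : ∀ v ∈ W, ⁅x, v⁆ = 0 := by
      intro v hv
      rw [hv x hxA, hχx, zero_smul]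
    by_cases hWtop : W = ⊤
    · refine ⟨1, ?_⟩
      ext v
      have : v ∈ W := hWtop ▸ LieSubmodule.mem_top v
      simpa using hxW v this
    · -- pass to the quotient
      haveI : Nontrivial W := ⟨⟨⟨w, hwW⟩, 0, by simp [hw0]⟩⟩
      have hWpos : 0 < Module.finrank K W.toSubmodule := Module.finrank_pos
      have hq : Module.finrank K (V ⧸ W) + Module.finrank K W.toSubmodule
          = Module.finrank K V := Submodule.finrank_quotient_add_finrank W.toSubmodule
      have hqn : Module.finrank K (V ⧸ W) ≤ n := by omega
      obtain ⟨k, hk⟩ := ih (V ⧸ W) hqn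
      have hmk : ∀ (m : ℕ) (u : V),
          ((LieModule.toEnd K L (V ⧸ W) x) ^ m) ((LieSubmodule.Quotient.mk' W) u)
            = (LieSubmodule.Quotient.mk' W) (((LieModule.toEnd K L V x) ^ m) u) := by
        intro m
        induction m with
        | zero => intro u; simp
        | succ m ihm =>
          intro u
          rw [pow_succ', pow_succ', Module.End.mul_apply, Module.End.mul_apply,
            LieModule.toEnd_apply_apply, LieModule.toEnd_apply_apply, ihm,
            LieModuleHom.map_lie]
      refine ⟨k + 1, ?_⟩
      ext v
      have h1 : ((LieModule.toEnd K L V x) ^ k) v ∈ W := by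
        have h2 : (LieSubmodule.Quotient.mk' W) (((LieModule.toEnd K L V x) ^ k) v) = 0 := by
          rw [← hmk k v, hk]
          simp
        exact (LieSubmodule.Quotient.mk_eq_zero W).mp h2
      rw [pow_succ', Module.End.mul_apply]
      simpa using hxW _ h1

end Nilpotency

section BaseChange

open scoped TensorProduct

variable {F : Type*} [Field F] {L : Type*} [LieRing L] [LieAlgebra F L]
variable (K : Type*) [Field K] [Algebra F K]

theorem baseChange_derivedSeriesOfIdeal (I : LieIdeal F L) (k : ℕ) :
    (LieAlgebra.derivedSeriesOfIdeal F L k I).baseChange K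
      = LieAlgebra.derivedSeriesOfIdeal K (K ⊗[F] L) k (I.baseChange K) := by
  induction k with
  | zero => simp only [LieAlgebra.derivedSeriesOfIdeal_zero]
  | succ k ih => rw [LieAlgebra.derivedSeriesOfIdeal_succ,
      LieAlgebra.derivedSeriesOfIdeal_succ, LieSubmodule.lie_baseChange, ih]

theorem isSolvable_baseChange (I : LieIdeal F L) [LieAlgebra.IsSolvable I] :
    LieAlgebra.IsSolvable (I.baseChange K) := by
  obtain ⟨k, hk⟩ := LieAlgebra.IsSolvable.solvable F I
  rw [LieIdeal.derivedSeries_eq_bot_iff] at hk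
  refine LieAlgebra.IsSolvable.mk (R := K) (k := k) ?_
  rw [LieIdeal.derivedSeries_eq_bot_iff, ← baseChange_derivedSeriesOfIdeal, hk,
    LieSubmodule.baseChange_bot]

end BaseChange

section OverF

open scoped TensorProduct

variable (F : Type*) [Field F] [CharZero F]
variable {L : Type*} [LieRing L] [LieAlgebra F L] [Module.Finite F L]
variable {V : Type*} [AddCommGroup V] [Module F V] [LieRingModule L V] [LieModule F L V]
  [Module.Finite F V]

theorem toEnd_nilpotent_of_mem_nilradical
    (x : L) (hx : x ∈ ⁅(⊤ : LieIdeal F L), LieAlgebra.radical F L⁆) :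
    IsNilpotent (LieModule.toEnd F L V x) := by
  classical
  set K := AlgebraicClosure F
  haveI : CharZero K := charZero_of_injective_algebraMap (algebraMap F K).injective
  set r : LieIdeal F L := LieAlgebra.radical F L with hr
  set A' : LieIdeal K (K ⊗[F] L) := r.baseChange K with hA'
  haveI : LieAlgebra.IsSolvable A' := isSolvable_baseChange K r
  haveI : Module.Finite K A' :=
    inferInstanceAs (Module.Finite K A'.toSubmodule)
  have hx' : (1 : K) ⊗ₜ[F] x ∈ ⁅(⊤ : LieIdeal K (K ⊗[F] L)), A'⁆ := by
    have h1 : (⁅(⊤ : LieIdeal F L), r⁆).baseChange K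
        = ⁅(⊤ : LieIdeal K (K ⊗[F] L)), A'⁆ := by
      rw [LieSubmodule.lie_baseChange, LieSubmodule.baseChange_top]
    exact h1 ▸ LieSubmodule.tmul_mem_baseChange_of_mem 1 hx
  obtain ⟨k, hk⟩ := toEnd_nilpotent_of_mem_lie_top_solvable K A'
    (Module.finrank K (K ⊗[F] V)) (K ⊗[F] V) le_rfl _ hx'
  rw [LieModule.toEnd_baseChange] at hk
  refine ⟨k, ?_⟩
  ext v
  have h2 : ((LieModule.toEnd F L V x) ^ k).baseChange K ((1 : K) ⊗ₜ[F] v) = 0 := by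
    rw [LinearMap.baseChange_pow, hk]
    simp
  have h3 : (1 : K) ⊗ₜ[F] (((LieModule.toEnd F L V x) ^ k) v) = (0 : K ⊗[F] V) := by
    rwa [LinearMap.baseChange_tmul] at h2
  simp only [LinearMap.zero_apply]
  refine (Module.forall_dual_apply_eq_zero_iff F _).mp fun φ0 => ?_
  have h4 := congrArg (LinearMap.baseChange K φ0) h3
  rw [LinearMap.baseChange_tmul, map_zero] at h4
  have h5 := congrArg (TensorProduct.rid F K) h4
  rw [TensorProduct.rid_tmul, map_zero] at h5
  exact (smul_eq_zero.mp h5).resolve_right one_ne_zero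

end OverF

/-- Let `F` be a field of characteristic zero, `g` a finite-dimensional
Lie algebra over `F` with solvable radical `r`, and let `n = ⁅g, r⁆` be its nilpotent
radical.  Then `n` acts trivially on every finite-dimensional irreducible `g`-module `V`. -/
theorem nilpotent_radical_acts_trivially_on_irreducible
    (F : Type*) [Field F] [CharZero F]
    (L : Type*) [LieRing L] [LieAlgebra F L] [Module.Finite F L]
    (V : Type*) [AddCommGroup V] [Module F V] [LieRingModule L V] [LieModule F L V]
    [Module.Finite F V] [LieModule.IsIrreducible F L V]
    (x : L) (hx : x ∈ ⁅(⊤ : LieIdeal F L), LieAlgebra.radical F L⁆) (v : V) :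
    ⁅x, v⁆ = 0 := by
  classical
  set nId : LieIdeal F L := ⁅(⊤ : LieIdeal F L), LieAlgebra.radical F L⁆ with hnId
  set W : LieSubmodule F L V :=
    { carrier := {u | ∀ y ∈ nId, ⁅y, u⁆ = 0}
      add_mem' := by
        intro u u' hu hu' y hy
        rw [lie_add, hu y hy, hu' y hy, add_zero]
      zero_mem' := by intro y _; simp
      smul_mem' := by
        intro c u hu y hy
        rw [lie_smul, hu y hy, smul_zero]
      lie_mem := by
        intro z u hu y hy
        rw [leibniz_lie, hu y hy, lie_zero, add_zero,
          hu _ (lie_mem_left F L nId y z hy)] } with hWdef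
  haveI : Nontrivial V := LieModule.nontrivial_of_isIrreducible F L V
  -- every element of nId acts nilpotently, so by Engel the action of nId on V is nilpotent
  have hnilp : ∀ y : nId, IsNilpotent (LieModule.toEnd F nId V y) := by
    intro y
    obtain ⟨k, hk⟩ := toEnd_nilpotent_of_mem_nilradical F (V := V) (y : L) y.2
    refine ⟨k, ?_⟩
    have heq : LieModule.toEnd F nId V y = LieModule.toEnd F L V (y : L) := by
      ext u
      rw [LieModule.toEnd_apply_apply, LieModule.toEnd_apply_apply]
      rfl
    rw [heq, hk]
  haveI hVnilp : LieModule.IsNilpotent nId V :=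
    LieAlgebra.isEngelian_of_isNoetherian V hnilp
  haveI := LieModule.nontrivial_max_triv_of_isNilpotent F nId V
  obtain ⟨m, hm⟩ := exists_ne (0 : LieModule.maxTrivSubmodule F nId V)
  have hm0 : (m : V) ≠ 0 := fun hc => hm (Subtype.ext hc)
  have hmW : (m : V) ∈ W := by
    intro y hy
    have h1 := ((LieModule.mem_maxTrivSubmodule F nId V (m : V)).mp m.2) ⟨y, hy⟩
    rwa [LieIdeal.coe_bracket_of_module] at h1
  have hWne : W ≠ ⊥ := by
    intro hc
    rw [hc] at hmW
    exact hm0 ((LieSubmodule.mem_bot _).mp hmW)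
  have hWtop : W = ⊤ := (eq_bot_or_eq_top W).resolve_left hWne
  have hvW : v ∈ W := hWtop ▸ LieSubmodule.mem_top v
  exact hvW x hx
end

section
/- Let F be a field and let p₁,…,p_m ∈ F[X] be pairwise distinct monic irreducible polynomials of degree d with p_i(X) = p₁(X+i−1), and s₁ ≥ ⋯ ≥ s_m natural numbers; write C_i = C_{p_i^{s_i}}. Suppose 𝒯' is a block matrix whose only nonzero blocks are L_i in the (i−1,i) positions (2 ≤ i ≤ m), where each L_i ∈ M_{d·s_{i−1}×d·s_i}(F) is injective (nullity 0) and satisfies L_i(C_i + I) = C_{i−1}L_i. Then there exists an invertible block-diagonal matrix P with blocks g_i(C_i), where g_i ∈ F[X] satisfies gcd(g_i, p_i) = 1, such that P𝒯'P⁻¹ = 𝒯, where 𝒯 has blocks B_i = S(−1, p_{i−1}, s_{i−1}, s_i) in the (i−1,i) positions and zeros elsewhere; moreover P commutes with the block-diagonal matrix 𝒜 with blocks C₁,…,C_m. -/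
open Polynomial

/-- The shifted polynomial `p_{i+1}(X) = p₁(X + i)`: we use 0-based indexing for the
paper's `p_i(X) = p₁(X + (i−1))`, `1 ≤ i ≤ m`. -/
noncomputable def pShift {F : Type*} [Field F] (q : Polynomial F) (i : ℕ) : Polynomial F :=
  q.comp (X + C (i : F))

/-- The companion matrix of a monic polynomial `g`, of size `n` (intended to be used
with `n = g.natDegree`): `1`'s on the subdiagonal, last column `(-g₀, …, -g_{n-1})ᵀ`. -/
def companionOf {F : Type*} [Field F] (g : Polynomial F) (n : ℕ) :
    Matrix (Fin n) (Fin n) F :=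
  fun i j => if (j : ℕ) = n - 1 then -g.coeff i else if (i : ℕ) = (j : ℕ) + 1 then 1 else 0

/-- The matrix `S(γ, f, n, r) ∈ M_{dn × dr}(F)` whose `(i,j)` entry is the coefficient of
`X^(i-1)` in `(X + γ)^(j-1) · f(X)^(n-r)` (rows and columns indexed from `0`). -/
noncomputable def Smat {F : Type*} [Field F] (γ : F) (f : Polynomial F) (d n r : ℕ) :
    Matrix (Fin (d * n)) (Fin (d * r)) F :=
  fun i j => ((X + C γ) ^ (j : ℕ) * f ^ (n - r)).coeff i

/-- A block diagonal matrix, indexed by `Σ i : Fin m, Fin (k i)`. -/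
def blockDiagS {F : Type*} [Field F] {m : ℕ} {k : Fin m → ℕ}
    (M : (i : Fin m) → Matrix (Fin (k i)) (Fin (k i)) F) :
    Matrix ((i : Fin m) × Fin (k i)) ((i : Fin m) × Fin (k i)) F :=
  fun a b => if h : a.1 = b.1 then M a.1 a.2 (Fin.cast (by rw [h]) b.2) else 0

/-- The block diagonal matrix `𝒜` with blocks the companion matrices `C_{pᵢ^{sᵢ}}`. -/
noncomputable def calA {F : Type*} [Field F] (q : Polynomial F) (d : ℕ) {m : ℕ}
    (ss : Fin m → ℕ) :
    Matrix ((i : Fin m) × Fin (d * ss i)) ((i : Fin m) × Fin (d * ss i)) F :=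
  blockDiagS fun i => companionOf ((pShift q i) ^ (ss i)) (d * ss i)

/-- The block diagonal matrix `ℰ` with blocks `C_{pᵢ^{sᵢ}} + (i−1)·I` (0-based: `+ i·I`). -/
noncomputable def calE {F : Type*} [Field F] (q : Polynomial F) (d : ℕ) {m : ℕ}
    (ss : Fin m → ℕ) :
    Matrix ((i : Fin m) × Fin (d * ss i)) ((i : Fin m) × Fin (d * ss i)) F :=
  blockDiagS fun i => companionOf ((pShift q i) ^ (ss i)) (d * ss i) + ((i : ℕ) : F) • 1

/-- The block matrix `𝒯` whose only nonzero blocks are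
`B_i = S(−1, p_{i−1}, s_{i−1}, s_i)` in the positions `(i−1, i)`, `2 ≤ i ≤ m`. -/
noncomputable def calT {F : Type*} [Field F] (q : Polynomial F) (d : ℕ) {m : ℕ}
    (ss : Fin m → ℕ) :
    Matrix ((i : Fin m) × Fin (d * ss i)) ((i : Fin m) × Fin (d * ss i)) F :=
  fun a b =>
    if (a.1 : ℕ) + 1 = (b.1 : ℕ) then Smat (-1) (pShift q a.1) d (ss a.1) (ss b.1) a.2 b.2
    else 0

/-- The block matrix `𝒯'` whose only nonzero blocks are the `L_i` in the positions
`(i−1, i)`, `2 ≤ i ≤ m`. -/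
noncomputable def calTgen {F : Type*} [Field F] {m : ℕ} (d : ℕ) (ss : Fin m → ℕ)
    (Lmat : (i j : Fin m) → (i : ℕ) + 1 = (j : ℕ) →
      Matrix (Fin (d * ss i)) (Fin (d * ss j)) F) :
    Matrix ((i : Fin m) × Fin (d * ss i)) ((i : Fin m) × Fin (d * ss i)) F :=
  fun a b => if h : (a.1 : ℕ) + 1 = (b.1 : ℕ) then Lmat a.1 b.1 h a.2 b.2 else 0


namespace StmtAux

/-- recursively defined sequence of polynomials -/
noncomputable def gRec {F : Type*} [Field F] (hch : ℕ → Polynomial F) : ℕ → Polynomial F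
  | 0 => 1
  | (b + 1) => (gRec hch b * hch b).comp (X + C 1)

variable {F : Type*} [Field F]

/-- coefficient vector of `x mod G`, length `N`. -/
noncomputable def cvec (G : Polynomial F) (N : ℕ) (x : Polynomial F) : Fin N → F :=
  fun i => (x %ₘ G).coeff i

lemma modByMonic_eq_of_dvd_sub {G x y : Polynomial F} (hG : G.Monic) (h : G ∣ x - y) :
    x %ₘ G = y %ₘ G := by
  have h0 : (x - y) %ₘ G = 0 := (modByMonic_eq_zero_iff_dvd hG).2 h
  rw [sub_modByMonic, sub_eq_zero] at h0
  exact h0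

lemma cvec_add (G : Polynomial F) (N : ℕ) (x y : Polynomial F) :
    cvec G N (x + y) = cvec G N x + cvec G N y := by
  funext i; simp [cvec, add_modByMonic]

lemma cvec_smul (G : Polynomial F) (N : ℕ) (c : F) (x : Polynomial F) :
    cvec G N (C c * x) = c • cvec G N x := by
  funext i; simp [cvec, ← smul_eq_C_mul, smul_modByMonic]

lemma modByMonic_eq_self_of_natDegree_lt {G x : Polynomial F} (hG : G.Monic)
    (h : x.natDegree < G.natDegree) : x %ₘ G = x := by
  rcases eq_or_ne x 0 with rfl | hx
  · simp
  · rw [modByMonic_eq_self_iff hG]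
    exact degree_lt_degree h

lemma cvec_eq_zero_iff {G : Polynomial F} {N : ℕ} (hG : G.Monic) (hN : G.natDegree = N)
    (x : Polynomial F) : cvec G N x = 0 ↔ G ∣ x := by
  rw [← modByMonic_eq_zero_iff_dvd hG]
  constructor
  · intro h
    ext k
    rcases lt_or_ge k N with hk | hk
    · have := congrFun h ⟨k, hk⟩
      simpa [cvec] using this
    · simp only [coeff_zero]
      refine coeff_eq_zero_of_degree_lt (lt_of_lt_of_le (degree_modByMonic_lt x hG) ?_)
      rw [degree_eq_natDegree hG.ne_zero, hN]
      exact_mod_cast Nat.cast_le.2 hk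
  · intro h; funext i; simp [cvec, h]

lemma coeff_sum_single {N : ℕ} (v : Fin N → F) (k : ℕ) :
    (∑ i : Fin N, C (v i) * X ^ (i : ℕ)).coeff k = if hk : k < N then v ⟨k, hk⟩ else 0 := by
  rw [finset_sum_coeff]
  split_ifs with hk
  · rw [Finset.sum_eq_single (⟨k, hk⟩ : Fin N)]
    · simp
    · intro j _ hj
      have : (j : ℕ) ≠ k := fun hc => hj (Fin.ext hc)
      simp only [coeff_C_mul, coeff_X_pow]
      rw [if_neg (fun h => this h.symm), mul_zero]
    · simp
  · apply Finset.sum_eq_zero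
    intro j _
    have : (j : ℕ) ≠ k := by omega
    simp only [coeff_C_mul, coeff_X_pow]
    rw [if_neg (fun h => this h.symm), mul_zero]

lemma cvec_surj {G : Polynomial F} {N : ℕ} (hG : G.Monic) (hN : G.natDegree = N) (hN0 : 0 < N)
    (v : Fin N → F) : ∃ x : Polynomial F, cvec G N x = v := by
  refine ⟨∑ i : Fin N, C (v i) * X ^ (i : ℕ), ?_⟩
  have hdeg : (∑ i : Fin N, C (v i) * X ^ (i : ℕ)).natDegree < N := by
    rcases eq_or_ne (∑ i : Fin N, C (v i) * X ^ (i : ℕ)) 0 with h0 | h0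
    · simpa [h0] using hN0
    · by_contra hcon
      push_neg at hcon
      have := coeff_sum_single v (∑ i : Fin N, C (v i) * X ^ (i : ℕ)).natDegree
      rw [dif_neg (by omega)] at this
      exact h0 (leadingCoeff_eq_zero.1 this)
  funext i
  rw [cvec, modByMonic_eq_self_of_natDegree_lt hG (by omega), coeff_sum_single, dif_pos i.isLt]

lemma natDegree_modByMonic_lt {G : Polynomial F} (x : Polynomial F) (hG : G.Monic)
    (h0 : 0 < G.natDegree) : (x %ₘ G).natDegree < G.natDegree := by
  rcases eq_or_ne (x %ₘ G) 0 with h | h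
  · simpa [h] using h0
  · have := degree_modByMonic_lt x hG
    rw [degree_eq_natDegree h, degree_eq_natDegree hG.ne_zero] at this
    exact_mod_cast this

lemma companion_mulVec {G : Polynomial F} {N : ℕ} (hG : G.Monic) (hN : G.natDegree = N)
    (hN0 : 0 < N) (x : Polynomial F) :
    (companionOf G N).mulVec (cvec G N x) = cvec G N (X * x) := by
  set r := x %ₘ G with hr
  have hrd : r.natDegree < N := by
    rcases eq_or_ne r 0 with h0 | h0
    · simpa [h0] using hN0
    · have := degree_modByMonic_lt x hG
      rw [← hr, degree_eq_natDegree h0, degree_eq_natDegree hG.ne_zero] at this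
      exact_mod_cast hN ▸ this
  set c := r.coeff (N - 1) with hc
  have hGC : G ∣ X * x - (X * r - C c * G) := by
    have h1 : X * x - (X * r - C c * G) = X * (x - r) + C c * G := by ring
    rw [h1]
    exact dvd_add (Dvd.dvd.mul_left (by
      refine ⟨x /ₘ G, ?_⟩
      have := modByMonic_add_div x G
      rw [← hr] at this
      linear_combination -this) X) (Dvd.intro_left _ rfl)
  have hdeg : (X * r - C c * G).degree < G.degree := by
    rw [degree_eq_natDegree hG.ne_zero, hN]
    rw [degree_lt_iff_coeff_zero]
    intro k hk
    have hk' : N ≤ k := by exact_mod_cast hk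
    rcases eq_or_lt_of_le hk' with h1 | h1
    · have hxr : (X * r).coeff k = r.coeff (N - 1) := by
        rw [← h1]
        rcases Nat.exists_eq_succ_of_ne_zero (show N ≠ 0 by omega) with ⟨N', hN'⟩
        rw [hN', coeff_X_mul]
        simp
      have hGk : G.coeff k = 1 := by rw [← h1, ← hN]; exact hG.coeff_natDegree
      simp [hxr, hGk, hc]
    · have h2 : (X * r).coeff k = 0 := by
        rcases Nat.exists_eq_succ_of_ne_zero (by omega : k ≠ 0) with ⟨k', rfl⟩
        rw [coeff_X_mul]
        exact coeff_eq_zero_of_natDegree_lt (by omega)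
      have h3 : G.coeff k = 0 := coeff_eq_zero_of_natDegree_lt (by omega)
      simp [h2, h3]
  have key : (X * x) %ₘ G = X * r - C c * G := by
    rw [modByMonic_eq_of_dvd_sub hG hGC]
    exact (modByMonic_eq_self_iff hG).2 hdeg
  funext i
  rw [Matrix.mulVec]
  show ∑ j : Fin N, companionOf G N i j * r.coeff j = ((X * x) %ₘ G).coeff i
  rw [key]
  have hsplit : ∀ j : Fin N, companionOf G N i j * r.coeff j =
      (if (j : ℕ) = N - 1 then -G.coeff i * r.coeff j else 0) +
      (if ((i : ℕ) = (j : ℕ) + 1 ∧ (j : ℕ) ≠ N - 1) then r.coeff j else 0) := by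
    intro j
    unfold companionOf
    rcases eq_or_ne (j : ℕ) (N - 1) with h | h
    · simp [h]
    · rcases eq_or_ne (i : ℕ) ((j : ℕ) + 1) with h2 | h2 <;> simp [h, h2]
  rw [Finset.sum_congr rfl (fun j _ => hsplit j), Finset.sum_add_distrib]
  have hsum1 : ∑ j : Fin N, (if (j : ℕ) = N - 1 then -G.coeff i * r.coeff j else 0) =
      -G.coeff i * r.coeff (N - 1) := by
    rw [Finset.sum_eq_single (⟨N - 1, by omega⟩ : Fin N)]
    · simp
    · intro j _ hj
      rw [if_neg (fun h => hj (Fin.ext (by simpa using h)))]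
    · simp
  have hsum2 : ∑ j : Fin N, (if ((i : ℕ) = (j : ℕ) + 1 ∧ (j : ℕ) ≠ N - 1) then r.coeff j else 0) =
      (X * r).coeff i := by
    rcases Nat.eq_zero_or_pos (i : ℕ) with h0 | h0
    · rw [Finset.sum_eq_zero]
      · have : ((i : ℕ) : ℕ) = 0 := h0
        rw [show ((i : ℕ)) = 0 from h0]
        simp
      · intro j _
        rw [if_neg (by omega)]
    · have hiN : (i : ℕ) < N := i.isLt
      rw [Finset.sum_eq_single (⟨(i : ℕ) - 1, by omega⟩ : Fin N)]
      · rw [if_pos (by constructor <;> simp <;> omega)]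
        have hXr : (X * r).coeff (i : ℕ) = r.coeff ((i : ℕ) - 1) := by
          rcases Nat.exists_eq_succ_of_ne_zero (by omega : (i : ℕ) ≠ 0) with ⟨i', hi'⟩
          rw [hi', coeff_X_mul]
          simp
        simpa using hXr.symm
      · intro j _ hj
        rw [if_neg]
        rintro ⟨h1, -⟩
        exact hj (Fin.ext (by simp; omega))
      · simp
  rw [hsum1, hsum2]
  simp [hc]
  ring

lemma aeval_companion_mulVec {G : Polynomial F} {N : ℕ} (hG : G.Monic) (hN : G.natDegree = N)
    (hN0 : 0 < N) (f x : Polynomial F) :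
    (aeval (companionOf G N) f).mulVec (cvec G N x) = cvec G N (f * x) := by
  induction f using Polynomial.induction_on with
  | C a =>
      rw [aeval_C, Algebra.algebraMap_eq_smul_one, Matrix.smul_mulVec, Matrix.one_mulVec,
        cvec_smul]
  | add p q hp hq =>
      rw [map_add, Matrix.add_mulVec, hp, hq, add_mul, cvec_add]
  | monomial n a hrec =>
      have h1 : C a * X ^ (n + 1) = X * (C a * X ^ n) := by ring
      rw [h1, map_mul, aeval_X, ← Matrix.mulVec_mulVec, hrec, companion_mulVec hG hN hN0,
        mul_assoc]
      ring_nf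

lemma single_eq_cvec {G : Polynomial F} {N : ℕ} (hG : G.Monic) (hN : G.natDegree = N)
    (j : Fin N) : (Pi.single j 1 : Fin N → F) = cvec G N (X ^ (j : ℕ)) := by
  funext i
  rw [cvec, modByMonic_eq_self_of_natDegree_lt hG (by rw [natDegree_X_pow, hN]; exact j.isLt),
    coeff_X_pow]
  rcases eq_or_ne i j with rfl | hij
  · simp
  · rw [Pi.single_eq_of_ne hij, if_neg (fun h => hij (Fin.ext h))]

lemma matrix_ext_mulVec_single {Na Nb : ℕ} {M M' : Matrix (Fin Na) (Fin Nb) F}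
    (h : ∀ j, M.mulVec (Pi.single j 1) = M'.mulVec (Pi.single j 1)) : M = M' := by
  ext i j
  have := congrFun (h j) i
  simpa using this

lemma aeval_companion_self {G : Polynomial F} {N : ℕ} (hG : G.Monic) (hN : G.natDegree = N)
    (hN0 : 0 < N) : aeval (companionOf G N) G = 0 := by
  apply matrix_ext_mulVec_single
  intro j
  rw [single_eq_cvec hG hN, aeval_companion_mulVec hG hN hN0,
    (cvec_eq_zero_iff hG hN _).2 (Dvd.intro _ rfl), Matrix.zero_mulVec]

lemma isUnit_aeval_companion {G : Polynomial F} {N : ℕ} (hG : G.Monic) (hN : G.natDegree = N)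
    (hN0 : 0 < N) {g : Polynomial F} (hcop : IsCoprime g G) :
    IsUnit (aeval (companionOf G N) g) := by
  obtain ⟨u, v, huv⟩ := hcop
  have h1 : aeval (companionOf G N) (u * g + v * G) = 1 := by rw [huv, map_one]
  rw [map_add, map_mul, map_mul, aeval_companion_self hG hN hN0, mul_zero, add_zero] at h1
  refine ⟨⟨aeval (companionOf G N) g, aeval (companionOf G N) u, ?_, h1⟩, rfl⟩
  rw [← map_mul, mul_comm, map_mul, h1]

/-- The classification of injective intertwiners. -/
lemma classify {p Gb : Polynomial F} {d n r : ℕ} (hp : p.Monic) (hpd : p.natDegree = d)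
    (hd : 0 < d) (hrn : r ≤ n) (hr : 1 ≤ r)
    (hGb : Gb.Monic) (hNb : Gb.natDegree = d * r)
    (hcomp : Gb.comp (X + C (-1 : F)) = p ^ r)
    (L : Matrix (Fin (d * n)) (Fin (d * r)) F)
    (hLrel : L * companionOf Gb (d * r) = (companionOf (p ^ n) (d * n) - 1) * L)
    (hLinj : ∀ vec : Fin (d * r) → F, L.mulVec vec = 0 → vec = 0) :
    ∃ h : Polynomial F, ¬ p ∣ h ∧ ∀ x : Polynomial F,
      L.mulVec (cvec Gb (d * r) x) =
        cvec (p ^ n) (d * n) (x.comp (X + C (-1 : F)) * (p ^ (n - r) * h)) := by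
  have hn : 1 ≤ n := le_trans hr hrn
  have hGa : (p ^ n).Monic := hp.pow _
  have hNa : (p ^ n).natDegree = d * n := by rw [natDegree_pow, hpd]; ring
  have hNb0 : 0 < d * r := Nat.mul_pos hd hr
  have hNa0 : 0 < d * n := Nat.mul_pos hd hn
  set Ca := companionOf (p ^ n) (d * n) with hCa
  set Cb := companionOf Gb (d * r) with hCb
  set v : Fin (d * n) → F := L.mulVec (cvec Gb (d * r) 1) with hv
  have transport : ∀ x : Polynomial F,
      L.mulVec (cvec Gb (d * r) x) = (aeval (Ca - 1) x).mulVec v := by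
    intro x
    induction x using Polynomial.induction_on with
    | C a =>
        have h2 : cvec Gb (d * r) (C a) = a • cvec Gb (d * r) 1 := by
          rw [← cvec_smul, mul_one]
        rw [h2, Matrix.mulVec_smul, aeval_C, Algebra.algebraMap_eq_smul_one,
          Matrix.smul_mulVec, Matrix.one_mulVec]
    | add x y hx hy =>
        rw [cvec_add, Matrix.mulVec_add, hx, hy, map_add, Matrix.add_mulVec]
    | monomial k a hrec =>
        have h1 : (C a * X ^ (k + 1) : Polynomial F) = X * (C a * X ^ k) := by ring
        have h3 : (Ca - 1) * (aeval (Ca - 1)) (C a * X ^ k) =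
            (aeval (Ca - 1)) (X * (C a * X ^ k)) := by
          conv_rhs => rw [map_mul, aeval_X]
        rw [h1, ← companion_mulVec hGb hNb hNb0, ← hCb, Matrix.mulVec_mulVec, hLrel,
          ← Matrix.mulVec_mulVec, hrec, Matrix.mulVec_mulVec, h3]
  have haevalsub : ∀ x : Polynomial F, aeval (Ca - 1) x = aeval Ca (x.comp (X + C (-1 : F))) := by
    intro x
    rw [aeval_comp, map_add, aeval_X, aeval_C, map_neg, map_one, ← sub_eq_add_neg]
  obtain ⟨w, hw⟩ := cvec_surj hGa hNa hNa0 v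
  have hdvd : p ^ n ∣ p ^ r * w := by
    have h0 : L.mulVec (cvec Gb (d * r) Gb) = 0 := by
      rw [(cvec_eq_zero_iff hGb hNb Gb).2 dvd_rfl, Matrix.mulVec_zero]
    rw [transport, haevalsub, hcomp, ← hw, aeval_companion_mulVec hGa hNa hNa0] at h0
    exact (cvec_eq_zero_iff hGa hNa _).1 h0
  have hdvd2 : p ^ (n - r) ∣ w := by
    have hsplit : p ^ n = p ^ r * p ^ (n - r) := by
      rw [← pow_add]; congr 1; omega
    rw [hsplit] at hdvd
    exact (mul_dvd_mul_iff_left (pow_ne_zero r hp.ne_zero)).1 hdvd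
  obtain ⟨h, hh⟩ := hdvd2
  refine ⟨h, ?_, ?_⟩
  · rintro ⟨h', rfl⟩
    set x₀ : Polynomial F := (p ^ (r - 1)).comp (X + C (1 : F)) with hx₀
    have hx₀comp : x₀.comp (X + C (-1 : F)) = p ^ (r - 1) := by
      rw [hx₀, comp_assoc]
      have : (X + C (1 : F)).comp (X + C (-1 : F)) = X := by
        rw [add_comp, X_comp, C_comp, add_assoc, ← C_add, neg_add_cancel, C_0, add_zero]
      rw [this, comp_X]
    have hL0 : L.mulVec (cvec Gb (d * r) x₀) = 0 := by
      rw [transport, haevalsub, ← hw, aeval_companion_mulVec hGa hNa hNa0, hx₀comp, hh]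
      refine (cvec_eq_zero_iff hGa hNa _).2 ?_
      have e : (r - 1) + ((n - r) + 1) = n := by omega
      have hpow : p ^ (r - 1) * (p ^ (n - r) * (p * h')) = p ^ n * h' := by
        conv_rhs => rw [← e]
        rw [pow_add, pow_add, pow_one]
        ring
      exact ⟨h', hpow⟩
    have hvec0 : cvec Gb (d * r) x₀ = 0 := hLinj _ hL0
    have hdvd0 : Gb ∣ x₀ := (cvec_eq_zero_iff hGb hNb _).1 hvec0
    have hx₀ne : x₀ ≠ 0 := ((hp.pow _).comp_X_add_C _).ne_zero
    have hdeg := natDegree_le_of_dvd hdvd0 hx₀ne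
    rw [hNb, hx₀, natDegree_comp, natDegree_X_add_C, natDegree_pow, hpd, mul_one] at hdeg
    have h2 : (r - 1) * d < r * d := Nat.mul_lt_mul_of_lt_of_le (by omega) le_rfl (by omega)
    have h3 : d * r = r * d := Nat.mul_comm d r
    omega
  · intro x
    rw [transport, haevalsub, ← hw, aeval_companion_mulVec hGa hNa hNa0, hh]

lemma smat_mulVec {p Gb : Polynomial F} {d n r : ℕ} (hp : p.Monic) (hpd : p.natDegree = d)
    (hd : 0 < d) (hrn : r ≤ n) (hr : 1 ≤ r)
    (hGb : Gb.Monic) (hNb : Gb.natDegree = d * r)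
    (hcomp : Gb.comp (X + C (-1 : F)) = p ^ r) (x : Polynomial F) :
    (Smat (-1 : F) p d n r).mulVec (cvec Gb (d * r) x) =
      cvec (p ^ n) (d * n) (x.comp (X + C (-1 : F)) * p ^ (n - r)) := by
  have hGa : (p ^ n).Monic := hp.pow _
  have hNa : (p ^ n).natDegree = d * n := by rw [natDegree_pow, hpd]; ring
  set z : Polynomial F := X + C (-1 : F) with hz
  set r' := x %ₘ Gb with hr'
  have hr'deg : r'.natDegree < d * r := by
    have := natDegree_modByMonic_lt x hGb (by rw [hNb]; positivity)
    rwa [hNb] at this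
  set y := r'.comp z * p ^ (n - r) with hy
  have harith : d * r + (n - r) * d = d * n := by
    rw [Nat.mul_comm (n - r) d, ← Nat.mul_add]
    congr 1
    omega
  have hydeg : y.natDegree < d * n := by
    have h1 : (r'.comp z).natDegree ≤ r'.natDegree := by
      rw [natDegree_comp, hz, natDegree_X_add_C, mul_one]
    have h2 : y.natDegree ≤ (r'.comp z).natDegree + (p ^ (n - r)).natDegree :=
      natDegree_mul_le
    have h3 : (p ^ (n - r)).natDegree = (n - r) * d := by rw [natDegree_pow, hpd]
    have hdr : 1 ≤ d * r := Nat.mul_pos hd hr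
    omega
  have key : (x.comp z * p ^ (n - r)) %ₘ p ^ n = y := by
    have hdvd : p ^ n ∣ x.comp z * p ^ (n - r) - y := by
      have hx : x = Gb * (x /ₘ Gb) + r' := by
        conv_lhs => rw [← modByMonic_add_div x Gb]
        rw [← hr']; ring
      have hcompx : x.comp z = p ^ r * (x /ₘ Gb).comp z + r'.comp z := by
        conv_lhs => rw [hx]
        rw [add_comp, mul_comp, hz, hcomp]
      refine ⟨(x /ₘ Gb).comp z, ?_⟩
      have hpn : (p : Polynomial F) ^ n = p ^ r * p ^ (n - r) := by
        rw [← pow_add]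
        congr 1
        omega
      rw [hcompx, hy, hpn]
      ring
    rw [modByMonic_eq_of_dvd_sub hGa hdvd,
      modByMonic_eq_self_of_natDegree_lt hGa (by rw [hNa]; exact hydeg)]
  funext i
  show ∑ j : Fin (d * r), Smat (-1 : F) p d n r i j * (x %ₘ Gb).coeff j
      = ((x.comp z * p ^ (n - r)) %ₘ (p ^ n)).coeff i
  rw [key]
  have hsum : r'.comp z = ∑ j ∈ Finset.range (d * r), C (r'.coeff j) * z ^ j := by
    rw [comp_eq_sum_left]
    exact sum_over_range' r' (by simp) (d * r) hr'deg
  rw [hy, hsum, Finset.sum_mul, finset_sum_coeff, ← Fin.sum_univ_eq_sum_range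
    (fun j => (C (r'.coeff j) * z ^ j * p ^ (n - r)).coeff i) (d * r)]
  apply Finset.sum_congr rfl
  intro j _
  rw [mul_assoc, coeff_C_mul]
  show ((X + C (-1 : F)) ^ (j : ℕ) * p ^ (n - r)).coeff i * (x %ₘ Gb).coeff j = _
  rw [← hz, ← hr']
  ring

lemma fin_cast_self {n : ℕ} (h : n = n) (x : Fin n) : Fin.cast h x = x :=
  Fin.ext (by simp)

lemma blockDiagS_apply_same {m : ℕ} {k : Fin m → ℕ}
    (M : (i : Fin m) → Matrix (Fin (k i)) (Fin (k i)) F) (i : Fin m) (x y : Fin (k i)) :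
    blockDiagS M ⟨i, x⟩ ⟨i, y⟩ = M i x y := by
  show dite _ _ _ = _
  rw [dif_pos rfl, fin_cast_self]

lemma blockDiagS_apply_ne {m : ℕ} {k : Fin m → ℕ}
    (M : (i : Fin m) → Matrix (Fin (k i)) (Fin (k i)) F) (a b : (i : Fin m) × Fin (k i))
    (h : a.1 ≠ b.1) : blockDiagS M a b = 0 := dif_neg h

lemma blockDiagS_mul {m : ℕ} {k : Fin m → ℕ}
    (M N : (i : Fin m) → Matrix (Fin (k i)) (Fin (k i)) F) :
    blockDiagS M * blockDiagS N = blockDiagS (fun i => M i * N i) := by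
  funext a b
  rw [Matrix.mul_apply, ← Finset.univ_sigma_univ, Finset.sum_sigma]
  rcases eq_or_ne a.1 b.1 with hab | hab
  · rw [Finset.sum_eq_single a.1]
    · simp only [blockDiagS, dif_pos rfl, dif_pos hab, dif_pos]
      rw [Matrix.mul_apply]
      apply Finset.sum_congr rfl
      intro xc _
      rw [fin_cast_self]
    · intro i _ hi
      apply Finset.sum_eq_zero
      intro xc _
      simp only [blockDiagS]
      rw [dif_neg (fun hc => hi hc.symm), zero_mul]
    · simp
  · rw [Finset.sum_eq_zero, blockDiagS, dif_neg hab]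
    intro i _
    apply Finset.sum_eq_zero
    intro xc _
    simp only [blockDiagS]
    rcases eq_or_ne a.1 i with h1 | h1
    · rw [dif_neg (fun hc => hab (h1.trans hc)), mul_zero]
    · rw [dif_neg h1, zero_mul]

lemma blockDiagS_one {m : ℕ} {k : Fin m → ℕ} :
    blockDiagS (fun i => (1 : Matrix (Fin (k i)) (Fin (k i)) F)) = 1 := by
  funext a b
  simp only [blockDiagS]
  rcases eq_or_ne a b with rfl | hab
  · rw [dif_pos rfl, fin_cast_self, Matrix.one_apply_eq, Matrix.one_apply_eq]
  · rw [Matrix.one_apply_ne hab]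
    rcases eq_or_ne a.1 b.1 with h1 | h1
    · rw [dif_pos h1, Matrix.one_apply_ne]
      intro hc
      apply hab
      obtain ⟨a1, a2⟩ := a; obtain ⟨b1, b2⟩ := b
      cases h1
      rw [fin_cast_self] at hc
      exact Sigma.ext rfl (heq_of_eq hc)
    · rw [dif_neg h1]

lemma isUnit_blockDiagS {m : ℕ} {k : Fin m → ℕ}
    (M : (i : Fin m) → Matrix (Fin (k i)) (Fin (k i)) F)
    (h : ∀ i, ∃ N : Matrix (Fin (k i)) (Fin (k i)) F, M i * N = 1 ∧ N * M i = 1) :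
    IsUnit (blockDiagS M) := by
  choose N h1 h2 using h
  refine ⟨⟨blockDiagS M, blockDiagS N, ?_, ?_⟩, rfl⟩
  · rw [blockDiagS_mul, show (fun i => M i * N i) = (fun i => (1 : Matrix _ _ F)) from
      funext fun i => h1 i, blockDiagS_one]
  · rw [blockDiagS_mul, show (fun i => N i * M i) = (fun i => (1 : Matrix _ _ F)) from
      funext fun i => h2 i, blockDiagS_one]

lemma blockDiagS_mul_calTgen {m : ℕ} {d : ℕ} {ss : Fin m → ℕ}
    (M : (i : Fin m) → Matrix (Fin (d * ss i)) (Fin (d * ss i)) F)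
    (L : (i j : Fin m) → (i : ℕ) + 1 = (j : ℕ) → Matrix (Fin (d * ss i)) (Fin (d * ss j)) F) :
    blockDiagS M * calTgen d ss L = calTgen d ss (fun i j h => M i * L i j h) := by
  funext a b
  obtain ⟨a1, a2⟩ := a
  obtain ⟨b1, b2⟩ := b
  rw [Matrix.mul_apply, ← Finset.univ_sigma_univ, Finset.sum_sigma]
  simp only [calTgen]
  rcases eq_or_ne ((a1 : ℕ) + 1) (b1 : ℕ) with hab | hab
  · rw [dif_pos hab, Finset.sum_eq_single a1]
    · rw [Matrix.mul_apply]
      apply Finset.sum_congr rfl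
      intro xc _
      rw [blockDiagS_apply_same, dif_pos hab]
    · intro i _ hi
      apply Finset.sum_eq_zero
      intro xc _
      rw [blockDiagS_apply_ne _ _ _ (fun hc : a1 = i => hi hc.symm), zero_mul]
    · simp
  · rw [dif_neg hab, Finset.sum_eq_zero]
    intro i _
    apply Finset.sum_eq_zero
    intro xc _
    rcases eq_or_ne a1 i with h1 | h1
    · rw [dif_neg (fun hc : (i : ℕ) + 1 = (b1 : ℕ) => hab (by rw [h1]; exact hc)), mul_zero]
    · rw [blockDiagS_apply_ne _ _ _ h1, zero_mul]

lemma calTgen_mul_blockDiagS {m : ℕ} {d : ℕ} {ss : Fin m → ℕ}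
    (M : (i : Fin m) → Matrix (Fin (d * ss i)) (Fin (d * ss i)) F)
    (L : (i j : Fin m) → (i : ℕ) + 1 = (j : ℕ) → Matrix (Fin (d * ss i)) (Fin (d * ss j)) F) :
    calTgen d ss L * blockDiagS M = calTgen d ss (fun i j h => L i j h * M j) := by
  funext a b
  obtain ⟨a1, a2⟩ := a
  obtain ⟨b1, b2⟩ := b
  rw [Matrix.mul_apply, ← Finset.univ_sigma_univ, Finset.sum_sigma]
  simp only [calTgen]
  rcases eq_or_ne ((a1 : ℕ) + 1) (b1 : ℕ) with hab | hab
  · rw [dif_pos hab, Finset.sum_eq_single b1]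
    · rw [Matrix.mul_apply]
      apply Finset.sum_congr rfl
      intro xc _
      rw [blockDiagS_apply_same, dif_pos hab]
    · intro i _ hi
      apply Finset.sum_eq_zero
      intro xc _
      rw [blockDiagS_apply_ne _ _ _ hi, mul_zero]
    · simp
  · rw [dif_neg hab, Finset.sum_eq_zero]
    intro i _
    apply Finset.sum_eq_zero
    intro xc _
    rcases eq_or_ne ((a1 : ℕ) + 1) (i : ℕ) with h1 | h1
    · rw [blockDiagS_apply_ne _ _ _ (fun hc : i = b1 => hab (by rw [← hc]; exact h1)), mul_zero]
    · rw [dif_neg h1, zero_mul]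

lemma calTgen_congr {m : ℕ} {d : ℕ} {ss : Fin m → ℕ}
    {L1 L2 : (i j : Fin m) → (i : ℕ) + 1 = (j : ℕ) → Matrix (Fin (d * ss i)) (Fin (d * ss j)) F}
    (h : ∀ i j hij, L1 i j hij = L2 i j hij) : calTgen d ss L1 = calTgen d ss L2 := by
  funext a b
  simp only [calTgen]
  rcases eq_or_ne ((a.1 : ℕ) + 1) (b.1 : ℕ) with hab | hab
  · rw [dif_pos hab, dif_pos hab, h]
  · rw [dif_neg hab, dif_neg hab]

lemma calT_eq_calTgen {m : ℕ} (q : Polynomial F) (d : ℕ) (ss : Fin m → ℕ) :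
    calT q d ss = calTgen d ss
      (fun i j _ => Smat (-1 : F) (pShift q i) d (ss i) (ss j)) := by
  funext a b
  simp only [calT, calTgen]
  rw [dite_eq_ite]

end StmtAux

/-- Let `p₁,…,p_m` be pairwise distinct monic irreducible polynomials
of degree `d` with `p_i(X) = p₁(X+i−1)` and `s₁ ≥ ⋯ ≥ s_m ≥ 1`.  If `𝒯'` is a block
matrix whose only nonzero blocks are injective matrices `L_i` in the positions `(i−1,i)`
satisfying `L_i(C_i + I) = C_{i−1}L_i`, then there is an invertible block diagonal
matrix `P` with blocks `g_i(C_i)`, `gcd(g_i, p_i) = 1`, such that `P 𝒯' P⁻¹ = 𝒯` and `P`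
commutes with the block diagonal matrix `𝒜` of the companion matrices `C_i`. -/
theorem normalize_superdiagonal_blocks
    {F : Type*} [Field F] (q : Polynomial F) (d m : ℕ) (ss : Fin m → ℕ)
    (hq : q.Monic) (hirr : Irreducible q) (hdeg : q.natDegree = d) (hd : 1 ≤ d)
    (hm : 1 < m)
    (hdistinct : ∀ i j : Fin m, i ≠ j → pShift q i ≠ pShift q j)
    (hdec : ∀ i j : Fin m, i ≤ j → ss j ≤ ss i) (hss : ∀ i, 1 ≤ ss i)
    (Lmat : (i j : Fin m) → (i : ℕ) + 1 = (j : ℕ) →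
      Matrix (Fin (d * ss i)) (Fin (d * ss j)) F)
    (hinj : ∀ (i j : Fin m) (h : (i : ℕ) + 1 = (j : ℕ)),
      ∀ vec : Fin (d * ss j) → F, (Lmat i j h).mulVec vec = 0 → vec = 0)
    (hrel : ∀ (i j : Fin m) (h : (i : ℕ) + 1 = (j : ℕ)),
      Lmat i j h * (companionOf ((pShift q j) ^ (ss j)) (d * ss j) + 1) =
        companionOf ((pShift q i) ^ (ss i)) (d * ss i) * Lmat i j h) :
    ∃ g : Fin m → Polynomial F,
      (∀ i : Fin m, IsCoprime (g i) (pShift q i)) ∧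
      (let P := blockDiagS fun i =>
          Polynomial.aeval (companionOf ((pShift q i) ^ (ss i)) (d * ss i)) (g i);
        IsUnit P ∧
        P * calTgen d ss Lmat * P⁻¹ = calT q d ss ∧
        P * calA q d ss = calA q d ss * P) := by
  classical
  obtain ⟨hd', hm'⟩ := And.intro hd hm
  -- basic facts about the shifted polynomials
  have hpm : ∀ i : ℕ, (pShift q i).Monic := fun i => hq.comp_X_add_C _
  have hpdeg : ∀ i : ℕ, (pShift q i).natDegree = d := fun i => by
    rw [pShift, natDegree_comp, natDegree_X_add_C, mul_one, hdeg]
  have hpirr : ∀ i : ℕ, Irreducible (pShift q i) := by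
    intro i
    have h2 := (MulEquiv.irreducible_iff (algEquivAevalXAddC ((i : ℕ) : F))).mpr hirr
    simpa [pShift, comp_eq_aeval] using h2
  have hshift : ∀ i : ℕ, (pShift q (i + 1)).comp (X + C (-1 : F)) = pShift q i := by
    intro i
    rw [pShift, pShift, comp_assoc]
    congr 1
    rw [add_comp, X_comp, C_comp, add_assoc, ← C_add]
    congr 1
    push_cast
    ring
  have hshift2 : ∀ i : ℕ, (pShift q i).comp (X + C (1 : F)) = pShift q (i + 1) := by
    intro i
    rw [pShift, pShift, comp_assoc]
    congr 1
    rw [add_comp, X_comp, C_comp, add_assoc, ← C_add]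
    congr 1
    push_cast
    ring
  have hGm : ∀ i : Fin m, ((pShift q (i : ℕ)) ^ (ss i)).Monic := fun i => (hpm _).pow _
  have hGdeg : ∀ i : Fin m, ((pShift q (i : ℕ)) ^ (ss i)).natDegree = d * ss i := fun i => by
    rw [natDegree_pow, hpdeg]; ring
  have hGpos : ∀ i : Fin m, 0 < d * ss i := fun i => Nat.mul_pos hd (hss i)
  have hGbcomp : ∀ (a b : Fin m), (a : ℕ) + 1 = (b : ℕ) →
      (((pShift q (b : ℕ)) ^ (ss b)).comp (X + C (-1 : F)) = (pShift q (a : ℕ)) ^ (ss b)) := by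
    intro a b hab
    rw [pow_comp, show ((b : ℕ)) = (a : ℕ) + 1 from hab.symm, hshift]
  -- the classification of each block
  have exmain : ∀ (a b : Fin m) (hab : (a : ℕ) + 1 = (b : ℕ)),
      ∃ h : Polynomial F, ¬ (pShift q (a : ℕ)) ∣ h ∧ ∀ x : Polynomial F,
        (Lmat a b hab).mulVec (StmtAux.cvec ((pShift q (b : ℕ)) ^ ss b) (d * ss b) x) =
          StmtAux.cvec ((pShift q (a : ℕ)) ^ ss a) (d * ss a)
            (x.comp (X + C (-1 : F)) * ((pShift q (a : ℕ)) ^ (ss a - ss b) * h)) := by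
    intro a b hab
    have hle : a ≤ b := by
      rw [Fin.le_def]; omega
    have hrel' : Lmat a b hab * companionOf ((pShift q (b : ℕ)) ^ ss b) (d * ss b) =
        (companionOf ((pShift q (a : ℕ)) ^ ss a) (d * ss a) - 1) * Lmat a b hab := by
      have h := hrel a b hab
      rw [Matrix.mul_add, Matrix.mul_one] at h
      rw [Matrix.sub_mul, Matrix.one_mul]
      exact eq_sub_of_add_eq h
    exact StmtAux.classify (hpm _) (hpdeg _) hd' (hdec a b hle) (hss b) (hGm b) (hGdeg b)
      (hGbcomp a b hab) (Lmat a b hab) hrel' (hinj a b hab)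
  -- the recursively chosen polynomials
  set hch : ℕ → Polynomial F := fun b =>
    if hb : b + 1 < m then
      Classical.choose (exmain ⟨b, by omega⟩ ⟨b + 1, hb⟩ rfl)
    else 1 with hch_def
  set g : Fin m → Polynomial F := fun i => StmtAux.gRec hch (i : ℕ) with hg_def
  -- coprimality of the chosen polynomials
  have hcop : ∀ n : ℕ, n < m → IsCoprime (StmtAux.gRec hch n) (pShift q n) := by
    intro n
    induction n with
    | zero =>
        intro _
        show IsCoprime (1 : Polynomial F) _
        exact isCoprime_one_left
    | succ b ih =>
        intro hb
        have hbm : b < m := by omega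
        have h1 : IsCoprime (StmtAux.gRec hch b) (pShift q b) := ih hbm
        have h2 : ¬ pShift q b ∣ hch b := by
          rw [hch_def]
          simp only [dif_pos hb]
          exact (Classical.choose_spec (exmain ⟨b, by omega⟩ ⟨b + 1, hb⟩ rfl)).1
        have h2' : IsCoprime (hch b) (pShift q b) :=
          ((hpirr b).coprime_iff_not_dvd.2 h2).symm
        have h3 : IsCoprime (StmtAux.gRec hch b * hch b) (pShift q b) := h1.mul_left h2'
        have h4 := h3.map ((aeval (X + C (1 : F)) : Polynomial F →ₐ[F] Polynomial F) :
          Polynomial F →+* Polynomial F)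
        show IsCoprime ((StmtAux.gRec hch b * hch b).comp (X + C 1)) (pShift q (b + 1))
        rw [← hshift2 b, comp_eq_aeval, comp_eq_aeval]
        exact h4
  -- units
  have hunit : ∀ i : Fin m, ∃ Ninv : Matrix (Fin (d * ss i)) (Fin (d * ss i)) F,
      aeval (companionOf ((pShift q (i : ℕ)) ^ ss i) (d * ss i)) (g i) * Ninv = 1 ∧
      Ninv * aeval (companionOf ((pShift q (i : ℕ)) ^ ss i) (d * ss i)) (g i) = 1 := by
    intro i
    have hcop' : IsCoprime (g i) ((pShift q (i : ℕ)) ^ ss i) :=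
      (hcop (i : ℕ) i.isLt).pow_right
    obtain ⟨u, hu⟩ := StmtAux.isUnit_aeval_companion (hGm i) (hGdeg i) (hGpos i) hcop'
    exact ⟨↑u⁻¹, by rw [← hu]; exact u.mul_inv, by rw [← hu]; exact u.inv_mul⟩
  have hPunit : IsUnit (blockDiagS fun i =>
      aeval (companionOf ((pShift q (i : ℕ)) ^ ss i) (d * ss i)) (g i)) :=
    StmtAux.isUnit_blockDiagS _ hunit
  -- the key per-block identity
  have key : ∀ (a b : Fin m) (hab : (a : ℕ) + 1 = (b : ℕ)),
      aeval (companionOf ((pShift q (a : ℕ)) ^ ss a) (d * ss a)) (g a) * Lmat a b hab =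
      Smat (-1 : F) (pShift q (a : ℕ)) d (ss a) (ss b) *
        aeval (companionOf ((pShift q (b : ℕ)) ^ ss b) (d * ss b)) (g b) := by
    rintro ⟨av, hav⟩ ⟨bv, hbv⟩ hab
    simp only at hab
    subst hab
    apply StmtAux.matrix_ext_mulVec_single
    intro j
    rw [StmtAux.single_eq_cvec (hGm ⟨av + 1, hbv⟩) (hGdeg ⟨av + 1, hbv⟩) j]
    rw [← Matrix.mulVec_mulVec, ← Matrix.mulVec_mulVec]
    have hchoose := Classical.choose_spec (exmain ⟨av, by omega⟩ ⟨av + 1, hbv⟩ rfl)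
    have hcheq : hch av = Classical.choose (exmain ⟨av, by omega⟩ ⟨av + 1, hbv⟩ rfl) := by
      rw [hch_def]
      simp only [dif_pos hbv]
    -- left side
    rw [show Lmat ⟨av, hav⟩ ⟨av + 1, hbv⟩ rfl = Lmat ⟨av, by omega⟩ ⟨av + 1, hbv⟩ rfl from rfl]
    rw [hchoose.2 (X ^ (j : ℕ))]
    rw [StmtAux.aeval_companion_mulVec (hGm ⟨av, hav⟩) (hGdeg ⟨av, hav⟩) (hGpos ⟨av, hav⟩)]
    -- right side
    rw [StmtAux.aeval_companion_mulVec (hGm ⟨av + 1, hbv⟩) (hGdeg ⟨av + 1, hbv⟩)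
      (hGpos ⟨av + 1, hbv⟩)]
    rw [StmtAux.smat_mulVec (hpm av) (hpdeg av) hd'
      (hdec ⟨av, hav⟩ ⟨av + 1, hbv⟩ (by rw [Fin.le_def]; exact Nat.le_succ av))
      (hss ⟨av + 1, hbv⟩) (hGm ⟨av + 1, hbv⟩) (hGdeg ⟨av + 1, hbv⟩)
      (hGbcomp ⟨av, hav⟩ ⟨av + 1, hbv⟩ rfl)]
    -- now both sides are cvec of polynomials; show the polynomials are equal
    congr 1
    have hgb : g ⟨av + 1, hbv⟩ = (StmtAux.gRec hch av * hch av).comp (X + C 1) := rfl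
    rw [hgb, mul_comp, ← hcheq]
    have hcompX : ∀ u : Polynomial F, (u.comp (X + C (1 : F))).comp (X + C (-1 : F)) = u := by
      intro u
      rw [comp_assoc]
      have : (X + C (1 : F)).comp (X + C (-1 : F)) = X := by
        rw [add_comp, X_comp, C_comp, add_assoc, ← C_add, neg_add_cancel, C_0, add_zero]
      rw [this, comp_X]
    rw [hcompX]
    ring
  -- conclude
  refine ⟨g, fun i => hcop (i : ℕ) i.isLt, ?_, ?_, ?_⟩
  · exact hPunit
  · have step1 : (blockDiagS fun i =>
        aeval (companionOf ((pShift q (i : ℕ)) ^ ss i) (d * ss i)) (g i)) *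
          calTgen d ss Lmat = calT q d ss * (blockDiagS fun i =>
        aeval (companionOf ((pShift q (i : ℕ)) ^ ss i) (d * ss i)) (g i)) := by
      rw [StmtAux.calT_eq_calTgen, StmtAux.blockDiagS_mul_calTgen, StmtAux.calTgen_mul_blockDiagS]
      exact StmtAux.calTgen_congr key
    show (blockDiagS fun i =>
        aeval (companionOf ((pShift q (i : ℕ)) ^ ss i) (d * ss i)) (g i)) *
          calTgen d ss Lmat * _⁻¹ = calT q d ss
    rw [step1, Matrix.mul_nonsing_inv_cancel_right _ _
      ((Matrix.isUnit_iff_isUnit_det _).1 hPunit)]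
  · show (blockDiagS fun i =>
        aeval (companionOf ((pShift q (i : ℕ)) ^ ss i) (d * ss i)) (g i)) * calA q d ss
      = calA q d ss * (blockDiagS fun i =>
        aeval (companionOf ((pShift q (i : ℕ)) ^ ss i) (d * ss i)) (g i))
    unfold calA
    rw [StmtAux.blockDiagS_mul, StmtAux.blockDiagS_mul]
    refine congrArg blockDiagS (funext fun i => ?_)
    calc aeval (companionOf ((pShift q (i : ℕ)) ^ ss i) (d * ss i)) (g i) *
          companionOf ((pShift q (i : ℕ)) ^ ss i) (d * ss i)
        = aeval (companionOf ((pShift q (i : ℕ)) ^ ss i) (d * ss i)) (g i * X) := by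
          rw [map_mul, aeval_X]
      _ = aeval (companionOf ((pShift q (i : ℕ)) ^ ss i) (d * ss i)) (X * g i) := by
          rw [mul_comm (g i) X]
      _ = companionOf ((pShift q (i : ℕ)) ^ ss i) (d * ss i) *
          aeval (companionOf ((pShift q (i : ℕ)) ^ ss i) (d * ss i)) (g i) := by
          rw [map_mul, aeval_X]
end
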